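/- Let $x \in \mathbb{R}^n$ with $x^{(i)} > 0$ for all $i$, let $d \in \mathbb{R}^n$, $\alpha > 0$, $\mu > 0$, and $\tau \in (0,1)$, and assume the fraction-to-the-boundary condition $x + \alpha d \ge (1-\tau)x$ holds componentwise. Then $\left| -\mu\sum_{i=1}^n \ln x^{(i)} + \mu\sum_{i=1}^n \ln(x^{(i)} + \alpha d^{(i)}) - \mu\alpha\sum_{i=1}^n \frac{d^{(i)}}{x^{(i)}} \right| \le \frac{\mu\alpha^2}{2(1-\tau)^2}\sum_{i=1}^n\left(\frac{d^{(i)}}{x^{(i)}}\right)^2.$ -/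

import Mathlib

open Real Set

-- L1: for t ≥ 0, t - log(1+t) ≤ t²/2
lemma aux_L1 (t : ℝ) (ht : 0 ≤ t) : t - Real.log (1 + t) ≤ t ^ 2 / 2 := by
  set f : ℝ → ℝ := fun s => Real.log (1 + s) - s + s ^ 2 / 2 with hf
  have hderiv : ∀ s : ℝ, 0 < s → HasDerivAt f ((1 + s)⁻¹ - 1 + s) s := by
    intro s hs
    have h1 : HasDerivAt (fun u : ℝ => 1 + u) 1 s := (hasDerivAt_id s).const_add 1
    have h2 : HasDerivAt (fun u : ℝ => Real.log (1 + u)) (1 / (1 + s)) s :=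
      h1.log (by nlinarith)
    have h3 : HasDerivAt (fun u : ℝ => u ^ 2 / 2) (s) s := by
      simpa using ((hasDerivAt_pow 2 s).div_const 2)
    have := (h2.sub (hasDerivAt_id s)).add h3
    rw [one_div] at this; exact this
  have hmono : MonotoneOn f (Ici (0 : ℝ)) := by
    apply monotoneOn_of_deriv_nonneg (convex_Ici 0)
    · apply ContinuousOn.add (ContinuousOn.sub ?_ (continuousOn_id))
        (by fun_prop)
      apply ContinuousOn.log (by fun_prop)
      intro s hs; simp only [mem_Ici] at hs; positivity
    · intro s hs
      rw [interior_Ici] at hs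
      exact ((hderiv s hs).differentiableAt).differentiableWithinAt
    · intro s hs
      rw [interior_Ici] at hs
      have hs' : 0 < s := hs
      rw [(hderiv s hs').deriv]
      have h1 : 0 < 1 + s := by linarith
      have heq : (1 + s)⁻¹ - 1 + s = s ^ 2 / (1 + s) := by
        field_simp; ring
      rw [heq]; positivity
  have h0 : f 0 = 0 := by simp [hf]
  have := hmono (by simp : (0:ℝ) ∈ Ici (0:ℝ)) (mem_Ici.mpr ht) ht
  rw [h0] at this
  simp only [hf] at this
  linarith

-- L2: for -1 < t ≤ 0, t - log(1+t) ≤ t²/(2(1+t))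
lemma aux_L2 (t : ℝ) (ht1 : -1 < t) (ht0 : t ≤ 0) :
    t - Real.log (1 + t) ≤ t ^ 2 / (2 * (1 + t)) := by
  set f : ℝ → ℝ := fun s => Real.log (1 + s) - s + s ^ 2 / (2 * (1 + s)) with hf
  have hderiv : ∀ s : ℝ, -1 < s →
      HasDerivAt f (1 / (1 + s) - 1 + (2 * s * (2 * (1 + s)) - s ^ 2 * 2) / (2 * (1 + s)) ^ 2) s := by
    intro s hs
    have hs1 : (0:ℝ) < 1 + s := by linarith
    have h1 : HasDerivAt (fun u : ℝ => 1 + u) 1 s := (hasDerivAt_id s).const_add 1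
    have h2 : HasDerivAt (fun u : ℝ => Real.log (1 + u)) (1 / (1 + s)) s :=
      h1.log hs1.ne'
    have h3 : HasDerivAt (fun u : ℝ => u ^ 2) (2 * s) s := by
      simpa using (hasDerivAt_pow 2 s)
    have h4 : HasDerivAt (fun u : ℝ => 2 * (1 + u)) 2 s := by
      simpa using h1.const_mul 2
    have h5 := h3.div h4 (by positivity)
    have := (h2.sub (hasDerivAt_id s)).add h5
    exact this
  have hanti : AntitoneOn f (Ioc (-1 : ℝ) 0) := by
    apply antitoneOn_of_deriv_nonpos (convex_Ioc (-1) 0)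
    · apply ContinuousOn.add (ContinuousOn.sub ?_ continuousOn_id)
        (ContinuousOn.div (by fun_prop) (by fun_prop) ?_)
      · apply ContinuousOn.log (by fun_prop)
        intro s hs; simp only [mem_Ioc] at hs; nlinarith [hs.1]
      · intro s hs; simp only [mem_Ioc] at hs; nlinarith [hs.1]
    · intro s hs
      rw [interior_Ioc] at hs
      exact ((hderiv s hs.1).differentiableAt).differentiableWithinAt
    · intro s hs
      rw [interior_Ioc] at hs
      obtain ⟨hs1, hs2⟩ := hs
      have h1 : (0:ℝ) < 1 + s := by linarith
      rw [(hderiv s hs1).deriv]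
      have key : 1 / (1 + s) - 1 + (2 * s * (2 * (1 + s)) - s ^ 2 * 2) / (2 * (1 + s)) ^ 2
          = -(s ^ 2) / (2 * (1 + s) ^ 2) := by
        field_simp; ring
      rw [key]
      apply div_nonpos_of_nonpos_of_nonneg (neg_nonpos.mpr (by positivity)) (by positivity)
  have h0 : f 0 = 0 := by simp [hf]
  have hmem : t ∈ Ioc (-1 : ℝ) 0 := ⟨ht1, ht0⟩
  have := hanti hmem (by constructor <;> norm_num) ht0
  rw [h0] at this
  simp only [hf] at this
  linarith

-- key scalar lemma
lemma aux_key (u c : ℝ) (hc0 : 0 < c) (hc1 : c ≤ 1) (hu : c ≤ u) :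
    |Real.log u - (u - 1)| ≤ (u - 1) ^ 2 / (2 * c ^ 2) := by
  have hu0 : 0 < u := lt_of_lt_of_le hc0 hu
  have hlog : Real.log u ≤ u - 1 := Real.log_le_sub_one_of_pos hu0
  rw [abs_sub_comm, abs_of_nonneg (by linarith)]
  rcases le_or_gt 1 u with h | h
  · have := aux_L1 (u - 1) (by linarith)
    have h2 : (u - 1) ^ 2 / 2 ≤ (u - 1) ^ 2 / (2 * c ^ 2) := by
      apply div_le_div_of_nonneg_left (by positivity) (by positivity) (by nlinarith)
    have hA := aux_L1 (u - 1) (by linarith : (0:ℝ) ≤ u - 1)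
    rw [show 1 + (u - 1) = u by ring] at hA
    linarith
  · have h1 := aux_L2 (u - 1) (by linarith) (by linarith)
    rw [show 1 + (u - 1) = u by ring] at h1
    have h2 : (u - 1) ^ 2 / (2 * u) ≤ (u - 1) ^ 2 / (2 * c ^ 2) := by
      apply div_le_div_of_nonneg_left (by positivity) (by positivity)
      nlinarith
    linarith

/-- Second-order error bound for the logarithmic barrier term along a step satisfying the
fraction-to-the-boundary rule `x + α d ≥ (1-τ) x`. -/
theorem barrier_term_second_order_bound
    (n : ℕ) (x d : Fin n → ℝ) (hx : ∀ i, 0 < x i)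
    (α μ τ : ℝ) (hα : 0 < α) (hμ : 0 < μ) (hτ : τ ∈ Set.Ioo (0 : ℝ) 1)
    (hftb : ∀ i, (1 - τ) * x i ≤ x i + α * d i) :
    |(-μ * ∑ i, Real.log (x i)) + μ * ∑ i, Real.log (x i + α * d i) -
        μ * α * ∑ i, d i / x i| ≤
      μ * α ^ 2 / (2 * (1 - τ) ^ 2) * ∑ i, (d i / x i) ^ 2 := by
  obtain ⟨hτ0, hτ1⟩ := hτ
  set c := 1 - τ with hc
  have hc0 : 0 < c := by linarith
  have hc1 : c ≤ 1 := by linarith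
  -- per index bound
  have key : ∀ i, |Real.log (x i + α * d i) - Real.log (x i) - α * (d i / x i)| ≤
      α ^ 2 / (2 * c ^ 2) * (d i / x i) ^ 2 := by
    intro i
    have hxi := hx i
    set u := (x i + α * d i) / x i with hu
    have hu0 : c ≤ u := by
      rw [hu, le_div_iff₀ hxi]
      linarith [hftb i]
    have hlogu : Real.log u = Real.log (x i + α * d i) - Real.log (x i) := by
      rw [hu, Real.log_div (by nlinarith [hftb i, hxi]) hxi.ne']
    have hum : u - 1 = α * (d i / x i) := by
      rw [hu]; field_simp; ring
    have := aux_key u c hc0 hc1 hu0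
    rw [hlogu, hum] at this
    calc |Real.log (x i + α * d i) - Real.log (x i) - α * (d i / x i)|
        ≤ (α * (d i / x i)) ^ 2 / (2 * c ^ 2) := this
      _ = α ^ 2 / (2 * c ^ 2) * (d i / x i) ^ 2 := by ring
  have hsum : (-μ * ∑ i, Real.log (x i)) + μ * ∑ i, Real.log (x i + α * d i) -
      μ * α * ∑ i, d i / x i
      = μ * ∑ i, (Real.log (x i + α * d i) - Real.log (x i) - α * (d i / x i)) := by
    rw [Finset.sum_sub_distrib, Finset.sum_sub_distrib]
    have h1 : ∑ i, α * (d i / x i) = α * ∑ i, d i / x i := by rw [Finset.mul_sum]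
    rw [h1]; ring
  rw [hsum, abs_mul, abs_of_pos hμ]
  calc μ * |∑ i, (Real.log (x i + α * d i) - Real.log (x i) - α * (d i / x i))|
      ≤ μ * ∑ i, |Real.log (x i + α * d i) - Real.log (x i) - α * (d i / x i)| := by
        apply mul_le_mul_of_nonneg_left (Finset.abs_sum_le_sum_abs _ _) hμ.le
    _ ≤ μ * ∑ i, α ^ 2 / (2 * c ^ 2) * (d i / x i) ^ 2 := by
        apply mul_le_mul_of_nonneg_left (Finset.sum_le_sum fun i _ => key i) hμ.le
    _ = μ * α ^ 2 / (2 * c ^ 2) * ∑ i, (d i / x i) ^ 2 := by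
        rw [← Finset.mul_sum]; ring
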